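/- Let M be a homogeneous n-graph and i a colour. Then every connected component of the graph (M, R_i) has diameter at most n: for all x,y ∈ M, if d_i(x,y) is finite then d_i(x,y) ≤ n. -/

import Mathlib

/-!
Common definitions for edge-coloured graphs ("n-graphs").
`V` is the vertex set and `C` the set of colours; `c x y` is the colour of the
pair `{x, y}` (only meaningful for `x ≠ y`).
-/

variable {V C : Type*}

/-- The colouring `c` is symmetric. -/
def CSymm (c : V → V → C) : Prop :=
  ∀ x y : V, c x y = c y x

/-- Every colour is realised on some pair of distinct vertices. -/
def CAll (c : V → V → C) : Prop :=
  ∀ i : C, ∃ x y : V, x ≠ y ∧ c x y = i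

/-- `σ` is an automorphism of the edge-coloured graph `(V, c)`. -/
def CAuto (c : V → V → C) (σ : Equiv.Perm V) : Prop :=
  ∀ x y : V, x ≠ y → c (σ x) (σ y) = c x y

/-- Homogeneity: every colour-preserving injection defined on a finite set of
vertices (equivalently, every colour-preserving bijection between two finite
subsets) extends to an automorphism. -/
def CHom (c : V → V → C) : Prop :=
  ∀ (A : Finset V) (f : V → V), Set.InjOn f (↑A : Set V) →
    (∀ x ∈ A, ∀ y ∈ A, x ≠ y → c (f x) (f y) = c x y) →
    ∃ σ : Equiv.Perm V, CAuto c σ ∧ ∀ x ∈ A, σ x = f x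

/-- The automorphism group acts transitively on the vertices. -/
def CTrans (c : V → V → C) : Prop :=
  ∀ x y : V, ∃ σ : Equiv.Perm V, CAuto c σ ∧ σ x = y

/-- Primitivity: the automorphism group acts transitively, and the only
equivalence relations invariant under all automorphisms are equality and the
total relation. -/
def CPrim (c : V → V → C) : Prop :=
  CTrans c ∧ ∀ E : V → V → Prop, Equivalence E →
    (∀ σ : Equiv.Perm V, CAuto c σ → ∀ x y, E x y → E (σ x) (σ y)) →
    (∀ x y, E x y ↔ x = y) ∨ (∀ x y, E x y)

/-- The `i`-coloured neighbourhood `R_i(a)`. -/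
def CNbhd (c : V → V → C) (i : C) (a : V) : Set V :=
  {x | x ≠ a ∧ c a x = i}

/-- `X` is a clique in colour `i`. -/
def CClique (c : V → V → C) (i : C) (X : Set V) : Prop :=
  ∀ x ∈ X, ∀ y ∈ X, x ≠ y → c x y = i

/-- There is an `i`-coloured path with `k` edges from `x` to `y`
(a sequence of pairwise distinct vertices). -/
def CPath (c : V → V → C) (i : C) (x y : V) (k : ℕ) : Prop :=
  ∃ p : Fin (k + 1) → V, Function.Injective p ∧ p 0 = x ∧ p (Fin.last k) = y ∧
    ∀ j : Fin k, c (p j.castSucc) (p j.succ) = i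

/-- The simple graph whose edges are pairs of colour `i`. -/
def CPG (c : V → V → C) (i : C) (hsymm : CSymm c) : SimpleGraph V where
  Adj a b := a ≠ b ∧ c a b = i
  symm := ⟨fun a b (h : a ≠ b ∧ c a b = i) => ⟨h.1.symm, (hsymm b a).trans h.2⟩⟩
  loopless := ⟨fun _ (h : _ ≠ _ ∧ _) => h.1 rfl⟩

lemma cpath_to_walk {c : V → V → C} {i : C} (hsymm : CSymm c) :
    ∀ {k : ℕ} {x y : V}, CPath c i x y k →
      ∃ w : (CPG c i hsymm).Walk x y, w.length = k := by
  intro k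
  induction k with
  | zero =>
    rintro x y ⟨p, hinj, h0, hl, _⟩
    have hxy : x = y := by rw [← h0, ← hl]; rfl
    subst hxy
    exact ⟨SimpleGraph.Walk.nil, rfl⟩
  | succ k ih =>
    rintro x y ⟨p, hinj, h0, hl, he⟩
    have hne : p 0 ≠ p 1 := fun h => by
      have := hinj h
      simp [Fin.ext_iff] at this
    have hadj : (CPG c i hsymm).Adj x (p 1) := by
      rw [← h0]
      exact show p 0 ≠ p 1 ∧ c (p 0) (p 1) = i from ⟨hne, by simpa using he 0⟩
    have htail : CPath c i (p 1) y k := by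
      refine ⟨p ∘ Fin.succ, hinj.comp (Fin.succ_injective _), rfl, ?_, ?_⟩
      · show p (Fin.last k).succ = y
        rw [Fin.succ_last]; exact hl
      · intro j
        show c (p j.castSucc.succ) (p j.succ.succ) = i
        rw [Fin.succ_castSucc]
        exact he j.succ
    obtain ⟨w, hw⟩ := ih htail
    exact ⟨SimpleGraph.Walk.cons hadj w, by simp [hw]⟩

lemma getVert_inj {G : SimpleGraph V} {x y : V} (w : G.Walk x y) (hw : w.IsPath) :
    ∀ a b, a ≤ w.length → b ≤ w.length → w.getVert a = w.getVert b → a = b := by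
  induction w with
  | nil => intro a b ha hb _; simp at ha hb; omega
  | @cons u v z h p ih =>
    rw [SimpleGraph.Walk.cons_isPath_iff] at hw
    intro a b ha hb heq
    simp [SimpleGraph.Walk.length_cons] at ha hb
    match a, b with
    | 0, 0 => rfl
    | 0, b + 1 =>
      exfalso
      apply hw.2
      rw [SimpleGraph.Walk.mem_support_iff_exists_getVert]
      refine ⟨b, ?_, by omega⟩
      simpa [SimpleGraph.Walk.getVert_cons_succ] using heq.symm
    | a + 1, 0 =>
      exfalso
      apply hw.2
      rw [SimpleGraph.Walk.mem_support_iff_exists_getVert]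
      refine ⟨a, ?_, by omega⟩
      simpa [SimpleGraph.Walk.getVert_cons_succ] using heq
    | a + 1, b + 1 =>
      simp only [SimpleGraph.Walk.getVert_cons_succ] at heq
      have := ih hw.1 a b (by omega) (by omega) heq
      omega

lemma walk_to_cpath {c : V → V → C} {i : C} (hsymm : CSymm c) {x y : V}
    (w : (CPG c i hsymm).Walk x y) (hw : w.IsPath) : CPath c i x y w.length := by
  refine ⟨fun j => w.getVert j, ?_, ?_, ?_, ?_⟩
  · intro a b hab
    exact Fin.ext (getVert_inj w hw a b (Nat.lt_succ_iff.mp a.isLt)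
      (Nat.lt_succ_iff.mp b.isLt) hab)
  · simp
  · simp [Fin.last]
  · intro j
    have h' : w.getVert j.val ≠ w.getVert (j.val + 1) ∧
        c (w.getVert j.val) (w.getVert (j.val + 1)) = i := w.adj_getVert_succ (i := j.val) j.isLt
    have := h'.2
    simpa using this

lemma cpath_take {c : V → V → C} {i : C} {k : ℕ}
    (p : Fin (k + 1) → V) (hinj : Function.Injective p)
    (he : ∀ j : Fin k, c (p j.castSucc) (p j.succ) = i) (m : ℕ) (hm : m ≤ k) :
    CPath c i (p 0) (p ⟨m, by omega⟩) m := by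
  refine ⟨fun j => p ⟨j.val, by omega⟩, ?_, ?_, ?_, ?_⟩
  · intro a b hab
    have := hinj hab
    simp [Fin.ext_iff] at this ⊢
    exact this
  · exact congrArg p (Fin.ext (by simp))
  · exact congrArg p (Fin.ext (by simp [Fin.last]))
  · intro j
    have := he ⟨j.val, by omega⟩
    convert this using 2 <;> simp [Fin.ext_iff]

lemma cpath_drop {c : V → V → C} {i : C} {k : ℕ}
    (p : Fin (k + 1) → V) (hinj : Function.Injective p)
    (he : ∀ j : Fin k, c (p j.castSucc) (p j.succ) = i) (m : ℕ) (hm : m ≤ k) :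
    CPath c i (p ⟨m, by omega⟩) (p (Fin.last k)) (k - m) := by
  refine ⟨fun j => p ⟨m + j.val, by omega⟩, ?_, ?_, ?_, ?_⟩
  · intro a b hab
    have := hinj hab
    simp [Fin.ext_iff] at this ⊢
    omega
  · exact congrArg p (Fin.ext (by simp))
  · exact congrArg p (Fin.ext (by simp [Fin.last]; omega))
  · intro j
    have hjk : m + j.val < k := by omega
    have := he ⟨m + j.val, hjk⟩
    convert this using 2 <;> simp [Fin.ext_iff, Nat.add_assoc]

lemma cpath_map {c : V → V → C} {i : C} {σ : Equiv.Perm V} (hσ : CAuto c σ)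
    {x y : V} {k : ℕ} (h : CPath c i x y k) : CPath c i (σ x) (σ y) k := by
  obtain ⟨p, hinj, h0, hl, he⟩ := h
  refine ⟨fun j => σ (p j), fun a b hab => hinj (σ.injective hab),
    congrArg σ h0, congrArg σ hl, ?_⟩
  intro j
  have hne : p j.castSucc ≠ p j.succ :=
    fun h => (Fin.castSucc_lt_succ (i := j)).ne (hinj h)
  rw [hσ _ _ hne]
  exact he j

/-- in a homogeneous `n`-graph, every connected component of
`(M, R_i)` has diameter at most `n`. -/
theorem stmt2 {V : Type*} {n : ℕ} (hn : 2 ≤ n) (c : V → V → Fin n)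
    (hsymm : CSymm c) (hall : CAll c) (hhom : CHom c) (i : Fin n) :
    ∀ x y : V, (∃ k : ℕ, CPath c i x y k) →
      ∃ k : ℕ, k ≤ n ∧ CPath c i x y k := by
  classical
  intro x y hex
  set k₀ := Nat.find hex with hk₀def
  have hk₀ : CPath c i x y k₀ := Nat.find_spec hex
  suffices h : k₀ ≤ n from ⟨k₀, h, hk₀⟩
  obtain ⟨p, hinj, h0, hl, he⟩ := hk₀
  -- the colours c x (p (m+1)) are pairwise distinct
  have key : ∀ a b : ℕ, (hab : a < b) → (hb : b < k₀) →
      c x (p ⟨a + 1, by omega⟩) ≠ c x (p ⟨b + 1, by omega⟩) := by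
    intro a b hab hb heq
    set u := p ⟨a + 1, by omega⟩ with hu
    set v := p ⟨b + 1, by omega⟩ with hv
    have hx0 : p ⟨0, by omega⟩ = x := by
      rw [show (⟨0, by omega⟩ : Fin (k₀ + 1)) = 0 from by ext; simp, h0]
    have hxu : x ≠ u := by
      rw [← hx0, hu]
      intro h
      have := hinj h
      simp [Fin.ext_iff] at this
    have hxv : x ≠ v := by
      rw [← hx0, hv]
      intro h
      have := hinj h
      simp [Fin.ext_iff] at this
    -- the partial map fixing x and sending u to v
    obtain ⟨σ, hσauto, hσ⟩ := hhom {x, u} (fun z => if z = x then x else v)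
      (by
        intro z hz w hw hzw
        simp only [Finset.coe_insert, Set.mem_insert_iff, Finset.coe_singleton,
          Set.mem_singleton_iff] at hz hw
        rcases hz with rfl | rfl <;> rcases hw with rfl | rfl
        · rfl
        · simp only [if_pos rfl, if_neg (Ne.symm hxu)] at hzw
          exact absurd hzw hxv
        · simp only [if_pos rfl, if_neg (Ne.symm hxu)] at hzw
          exact absurd hzw.symm hxv
        · rfl)
      (by
        intro z hz w hw hzw
        simp only [Finset.mem_insert, Finset.mem_singleton] at hz hw
        rcases hz with rfl | rfl <;> rcases hw with rfl | rfl
        · exact absurd rfl hzw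
        · simp only [if_pos rfl, if_neg (Ne.symm hxu)]
          exact heq.symm
        · simp only [if_pos rfl, if_neg (Ne.symm hxu)]
          rw [hsymm v, hsymm u]
          exact heq.symm
        · exact absurd rfl hzw)
    have hσx : σ x = x := by simpa using hσ x (by simp)
    have hσu : σ u = v := by
      have := hσ u (by simp)
      simpa [if_neg (Ne.symm hxu)] using this
    -- path from x to v of length a+1
    have pl : CPath c i x v (a + 1) := by
      have h1 : CPath c i (p 0) u (a + 1) := cpath_take p hinj he (a + 1) (by omega)
      rw [h0] at h1
      have h2 := cpath_map hσauto h1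
      rwa [hσx, hσu] at h2
    -- path from v to y of length k₀ - (b+1)
    have pr : CPath c i v y (k₀ - (b + 1)) := by
      have h1 := cpath_drop p hinj he (b + 1) (by omega)
      rwa [hl] at h1
    obtain ⟨w1, hw1⟩ := cpath_to_walk hsymm pl
    obtain ⟨w2, hw2⟩ := cpath_to_walk hsymm pr
    have hshort : (w1.append w2).bypass.length < k₀ := by
      calc (w1.append w2).bypass.length ≤ (w1.append w2).length :=
            SimpleGraph.Walk.length_bypass_le _
        _ = (a + 1) + (k₀ - (b + 1)) := by
            rw [SimpleGraph.Walk.length_append, hw1, hw2]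
        _ < k₀ := by omega
    have := walk_to_cpath hsymm (w1.append w2).bypass (SimpleGraph.Walk.bypass_isPath _)
    exact Nat.find_min hex hshort this
  -- build injection Fin k₀ → Fin n
  have hcard : k₀ ≤ n := by
    have hinj' : Function.Injective
        (fun m : Fin k₀ => c x (p ⟨m.val + 1, by omega⟩)) := by
      intro a b hab
      rcases lt_trichotomy a.val b.val with h | h | h
      · exact absurd hab (key a.val b.val h b.isLt)
      · exact Fin.ext h
      · exact absurd hab.symm (key b.val a.val h a.isLt)
    simpa using Fintype.card_le_of_injective _ hinj'
  exact hcard
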